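/- arXiv:1510.00451 — 2 statements merged into one kernel-verified Lean document; each statement's English description precedes it below -/
import Mathlib

section
/- Let κ₁, κ₂ > 0 and let ψ₁, ψ₂ : ℝ → ℝ be square-integrable on [0,1] and orthogonal in L²([0,1]), i.e. ∫₀¹ ψ₁(y) ψ₂(y) dy = 0. Then the effective diffusivity of the combined shear flow equals the iterated effective diffusivity: 𝒦[ψ₁+ψ₂, diag(κ₁,κ₂)] = 𝒦[ψ₁, 𝒦[ψ₂, diag(κ₁,κ₂)]]. -/
open MeasureTheory intervalIntegral

/-- Effective diffusivity of a shear flow `v = (0, v₂(y₁))` with mean-zero stream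
function `ψ` and diagonal base diffusivity `K = diag(κ₁, κ₂)`:
`𝒦[ψ, K] = diag(K₁₁, K₂₂ + (1/K₁₁) ∫₀¹ |ψ(y)|² dy)`. -/
noncomputable def effDiff (ψ : ℝ → ℝ) (K : Matrix (Fin 2) (Fin 2) ℝ) :
    Matrix (Fin 2) (Fin 2) ℝ :=
  !![K 0 0, 0; 0, K 1 1 + (1 / K 0 0) * ∫ y in (0:ℝ)..1, (ψ y) ^ 2]

/-- If `ψ₁, ψ₂` are square-integrable on `[0,1]` and orthogonal in `L²([0,1])`, then the
effective diffusivity of the combined shear flow equals the iterated effective diffusivity: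
`𝒦[ψ₁+ψ₂, diag(κ₁,κ₂)] = 𝒦[ψ₁, 𝒦[ψ₂, diag(κ₁,κ₂)]]`. -/
theorem effDiff_add_of_orthogonal (κ₁ κ₂ : ℝ) (hκ₁ : 0 < κ₁) (hκ₂ : 0 < κ₂)
    (ψ₁ ψ₂ : ℝ → ℝ)
    (hψ₁ : MemLp ψ₁ 2 (volume.restrict (Set.Icc (0:ℝ) 1)))
    (hψ₂ : MemLp ψ₂ 2 (volume.restrict (Set.Icc (0:ℝ) 1)))
    (horth : ∫ y in (0:ℝ)..1, ψ₁ y * ψ₂ y = 0) :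
    effDiff (ψ₁ + ψ₂) !![κ₁, 0; 0, κ₂] =
      effDiff ψ₁ (effDiff ψ₂ !![κ₁, 0; 0, κ₂]) := by
  have h1 : Integrable (fun x => ψ₁ x ^ 2) (volume.restrict (Set.Icc (0:ℝ) 1)) :=
    hψ₁.integrable_sq
  have h2 : Integrable (fun x => ψ₂ x ^ 2) (volume.restrict (Set.Icc (0:ℝ) 1)) :=
    hψ₂.integrable_sq
  have h12 : Integrable (fun x => ψ₁ x * ψ₂ x) (volume.restrict (Set.Icc (0:ℝ) 1)) := by
    refine ((h1.add h2).div_const 2).mono' (hψ₁.1.mul hψ₂.1)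
      (Filter.Eventually.of_forall fun x => ?_)
    rw [Real.norm_eq_abs]
    simp only [Pi.add_apply]
    refine abs_le.2 ⟨?_, ?_⟩
    · nlinarith [sq_nonneg (ψ₁ x + ψ₂ x)]
    · nlinarith [sq_nonneg (ψ₁ x - ψ₂ x)]
  have ii : ∀ {f : ℝ → ℝ}, Integrable f (volume.restrict (Set.Icc (0:ℝ) 1)) →
      IntervalIntegrable f volume 0 1 := fun hf => by
    apply IntegrableOn.intervalIntegrable
    rwa [Set.uIcc_of_le (by norm_num : (0:ℝ) ≤ 1)]
  have key : (∫ y in (0:ℝ)..1, ((ψ₁ + ψ₂) y) ^ 2)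
      = (∫ y in (0:ℝ)..1, (ψ₂ y) ^ 2) + (∫ y in (0:ℝ)..1, (ψ₁ y) ^ 2) := by
    have expand : ∀ y : ℝ, ((ψ₁ + ψ₂) y) ^ 2
        = (ψ₁ y) ^ 2 + (2 * (ψ₁ y * ψ₂ y) + (ψ₂ y) ^ 2) := by
      intro y; simp [Pi.add_apply]; ring
    rw [intervalIntegral.integral_congr (fun y _ => expand y),
      intervalIntegral.integral_add (ii h1) ((((ii h12).const_mul 2)).add (ii h2)),
      intervalIntegral.integral_add ((ii h12).const_mul 2) (ii h2),
      intervalIntegral.integral_const_mul, horth]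
    ring
  unfold effDiff
  rw [key]
  norm_num
  ring
end

section
/- Let κ₁, κ₂ > 0, let n ∈ ℕ, and let ψ₁, …, ψₙ : ℝ → ℝ be square-integrable on [0,1] and pairwise orthogonal in L²([0,1]), i.e. ∫₀¹ ψᵢ(y) ψⱼ(y) dy = 0 for all i ≠ j. Then the effective diffusivity of the sum equals the n-fold iterated effective diffusivity, with the explicit value 𝒦[ψ₁ + ⋯ + ψₙ, diag(κ₁,κ₂)] = 𝒦[ψ₁, 𝒦[ψ₂, ⋯ 𝒦[ψₙ, diag(κ₁,κ₂)] ⋯]] = diag(κ₁, κ₂ + (1/κ₁) ∑ᵢ ∫₀¹ |ψᵢ(y)|² dy). -/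
open MeasureTheory intervalIntegral

lemma mat_congr (κ₁ : ℝ) {a b : ℝ} (h : a = b) : !![κ₁, 0; 0, a] = !![κ₁, 0; 0, b] := by rw [h]

lemma effDiff_diag (κ₁ c : ℝ) (f : ℝ → ℝ) :
    effDiff f !![κ₁, 0; 0, c] = !![κ₁, 0; 0, c + (1/κ₁) * ∫ y in (0:ℝ)..1, (f y)^2] := by
  simp [effDiff]

lemma foldr_effDiff (κ₁ : ℝ) (l : List (ℝ → ℝ)) : ∀ c : ℝ,
    l.foldr effDiff !![κ₁, 0; 0, c] =
      !![κ₁, 0; 0, c + (1/κ₁) * (l.map (fun f => ∫ y in (0:ℝ)..1, (f y)^2)).sum] := by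
  induction l with
  | nil => intro c; simp
  | cons f l ih =>
      intro c
      rw [List.foldr_cons, ih c, effDiff_diag]
      exact mat_congr κ₁ (by simp; ring)

lemma integral_sq_sum (n : ℕ) (ψ : Fin n → ℝ → ℝ)
    (hint : ∀ i j : Fin n, IntervalIntegrable (fun y => ψ i y * ψ j y) volume 0 1)
    (horth : ∀ i j, i ≠ j → ∫ y in (0:ℝ)..1, ψ i y * ψ j y = 0) :
    (∫ y in (0:ℝ)..1, ((∑ i, ψ i y))^2) = ∑ i, ∫ y in (0:ℝ)..1, (ψ i y)^2 := by
  have h1 : ∀ y : ℝ, (∑ i, ψ i y)^2 = ∑ i, ∑ j, ψ i y * ψ j y := by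
    intro y; rw [sq, Finset.sum_mul_sum]
  rw [intervalIntegral.integral_congr (g := fun y => ∑ i, ∑ j : Fin n, ψ i y * ψ j y)
    (fun y _ => h1 y)]
  have hin : ∀ i : Fin n, IntervalIntegrable (fun y => ∑ j, ψ i y * ψ j y) volume 0 1 := by
    intro i
    have := IntervalIntegrable.sum (μ := volume) (a := (0:ℝ)) (b := 1) Finset.univ
      (f := fun j => fun y => ψ i y * ψ j y) (fun j _ => hint i j)
    have h2 : (∑ x : Fin n, fun y => ψ i y * ψ x y) = fun y => ∑ j, ψ i y * ψ j y := by
      funext y; simp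
    exact h2 ▸ this
  rw [intervalIntegral.integral_finset_sum (f := fun i y => ∑ j, ψ i y * ψ j y)
    (fun i _ => hin i)]
  refine Finset.sum_congr rfl fun i _ => ?_
  rw [intervalIntegral.integral_finset_sum (fun j _ => hint i j)]
  rw [Finset.sum_eq_single i (fun j _ hj => horth i j (Ne.symm hj)) (by simp)]
  simp_rw [← sq]


/-- For `n` stream functions `ψ₁, …, ψₙ` of same-direction shear flows, square-integrable
on `[0,1]` and pairwise orthogonal in `L²([0,1])`, the effective diffusivity of the sum
equals the `n`-fold iterated effective diffusivity
`𝒦[ψ₁, 𝒦[ψ₂, ⋯ 𝒦[ψₙ, diag(κ₁,κ₂)] ⋯]]`, with explicit value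
`diag(κ₁, κ₂ + (1/κ₁) ∑ᵢ ∫₀¹ |ψᵢ|²)`. -/
theorem effDiff_sum_of_pairwise_orthogonal (κ₁ κ₂ : ℝ) (hκ₁ : 0 < κ₁) (hκ₂ : 0 < κ₂)
    (n : ℕ) (ψ : Fin n → ℝ → ℝ)
    (hψ : ∀ i, MemLp (ψ i) 2 (volume.restrict (Set.Icc (0:ℝ) 1)))
    (horth : ∀ i j, i ≠ j → ∫ y in (0:ℝ)..1, ψ i y * ψ j y = 0) :
    effDiff (fun y => ∑ i, ψ i y) !![κ₁, 0; 0, κ₂] =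
        (List.ofFn ψ).foldr effDiff !![κ₁, 0; 0, κ₂] ∧
      (List.ofFn ψ).foldr effDiff !![κ₁, 0; 0, κ₂] =
        !![κ₁, 0; 0, κ₂ + (1 / κ₁) * ∑ i, ∫ y in (0:ℝ)..1, (ψ i y) ^ 2] := by
  have hint : ∀ i j : Fin n, IntervalIntegrable (fun y => ψ i y * ψ j y) volume 0 1 := by
    intro i j
    rw [intervalIntegrable_iff_integrableOn_Ioc_of_le (by norm_num)]
    have hm : MemLp (ψ i • ψ j) 1 (volume.restrict (Set.Icc (0:ℝ) 1)) :=
      (hψ j).smul (hψ i) (hpqr := ⟨by simpa using ENNReal.inv_two_add_inv_two⟩)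
    exact MeasureTheory.IntegrableOn.mono_set (memLp_one_iff_integrable.mp hm)
      Set.Ioc_subset_Icc_self
  have key := integral_sq_sum n ψ hint horth
  have hfold := foldr_effDiff κ₁ (List.ofFn ψ) κ₂
  have hsum : ((List.ofFn ψ).map (fun f => ∫ y in (0:ℝ)..1, (f y)^2)).sum
      = ∑ i, ∫ y in (0:ℝ)..1, (ψ i y)^2 := by
    rw [List.map_ofFn, List.sum_ofFn]; rfl
  constructor
  · rw [effDiff_diag, hfold, hsum]
    exact mat_congr κ₁ (by rw [key])
  · rw [hfold, hsum]
end
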